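/- arXiv:2506.21058 — 3 statements merged into one kernel-verified Lean document; each statement's English description precedes it below -/
import Mathlib

section
/- For fixed 0 ≤ w < 1 (i.e., |w|² < 1 in the bulk) and fixed integer l ≥ 0, the ratio of the incomplete Gamma function to the Gamma function satisfies lim_{N→∞} N^l · Γ(N − l, N w²) / Γ(N) = 1. -/
open MeasureTheory Filter Set

lemma intOn_pow_exp (k : ℕ) {r : ℝ} (hr : 0 < r) :
    IntegrableOn (fun t : ℝ => t ^ k * Real.exp (-(r * t))) (Set.Ioi 0) := by
  have h := integrableOn_rpow_mul_exp_neg_mul_rpow (s := (k:ℝ)) (p := 1)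
    (lt_of_lt_of_le neg_one_lt_zero (Nat.cast_nonneg k)) one_pos hr
  refine h.congr_fun (fun t ht => ?_) measurableSet_Ioi
  dsimp only
  rw [Real.rpow_natCast, Real.rpow_one, neg_mul]

lemma int_pow_exp (k : ℕ) {r : ℝ} (hr : 0 < r) :
    ∫ t in Set.Ioi (0:ℝ), t ^ k * Real.exp (-(r * t))
      = (k.factorial : ℝ) / r ^ (k+1) := by
  have h := Real.integral_rpow_mul_exp_neg_mul_Ioi (a := (k:ℝ)+1) (by positivity) hr
  rw [setIntegral_congr_fun measurableSet_Ioi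
    (g := fun t : ℝ => t ^ ((k:ℝ)+1-1) * Real.exp (-(r * t)))
    (fun t ht => by simp [add_sub_cancel_right, Real.rpow_natCast])]
  rw [h]
  rw [show ((k:ℝ)+1) = ((k+1 : ℕ) : ℝ) by push_cast; ring, Real.rpow_natCast]
  rw [show ((k+1:ℕ):ℝ) = (k:ℝ)+1 by push_cast; ring, Real.Gamma_nat_eq_factorial,
    one_div, inv_pow, div_eq_mul_inv, mul_comm]

lemma intOn_pow_exp1 (k : ℕ) :
    IntegrableOn (fun t : ℝ => t ^ k * Real.exp (-t)) (Set.Ioi 0) := by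
  have := intOn_pow_exp k one_pos
  simpa using this

lemma int_pow_exp1 (k : ℕ) :
    ∫ t in Set.Ioi (0:ℝ), t ^ k * Real.exp (-t) = (k.factorial : ℝ) := by
  have := int_pow_exp k one_pos
  simpa using this

lemma chernoff (k : ℕ) {a lam : ℝ} (ha : 0 ≤ a) (hl : 0 < lam) :
    ∫ t in Set.Ioc (0:ℝ) a, t ^ k * Real.exp (-t)
      ≤ Real.exp (lam * a) * ((k.factorial : ℝ) / (1 + lam) ^ (k+1)) := by
  have h1 : (0:ℝ) < 1 + lam := by linarith
  have hint : IntegrableOn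
      (fun t : ℝ => Real.exp (lam*a) * (t ^ k * Real.exp (-((1+lam) * t)))) (Set.Ioi 0) :=
    (intOn_pow_exp k h1).const_mul _
  have step1 : ∫ t in Set.Ioc (0:ℝ) a, t ^ k * Real.exp (-t)
      ≤ ∫ t in Set.Ioc (0:ℝ) a,
          Real.exp (lam*a) * (t ^ k * Real.exp (-((1+lam) * t))) := by
    apply setIntegral_mono_on
    · exact (Continuous.integrableOn_Ioc (by continuity))
    · exact hint.mono_set Set.Ioc_subset_Ioi_self
    · exact measurableSet_Ioc
    · intro t ht
      have h2 : Real.exp (-t) ≤ Real.exp (lam*a) * Real.exp (-((1+lam) * t)) := by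
        rw [← Real.exp_add]
        apply Real.exp_le_exp.mpr
        nlinarith [ht.2]
      have h3 : (0:ℝ) ≤ t ^ k := pow_nonneg ht.1.le k
      calc t ^ k * Real.exp (-t) ≤ t ^ k * (Real.exp (lam*a) * Real.exp (-((1+lam)*t))) :=
            mul_le_mul_of_nonneg_left h2 h3
        _ = Real.exp (lam*a) * (t ^ k * Real.exp (-((1+lam)*t))) := by ring
  have step2 : ∫ t in Set.Ioc (0:ℝ) a,
        Real.exp (lam*a) * (t ^ k * Real.exp (-((1+lam) * t)))
      ≤ ∫ t in Set.Ioi (0:ℝ),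
        Real.exp (lam*a) * (t ^ k * Real.exp (-((1+lam) * t))) := by
    apply setIntegral_mono_set hint
    · filter_upwards [self_mem_ae_restrict measurableSet_Ioi] with t ht
      exact mul_nonneg (Real.exp_pos _).le
        (mul_nonneg (pow_nonneg (le_of_lt ht) _) (Real.exp_pos _).le)
    · exact HasSubset.Subset.eventuallyLE Set.Ioc_subset_Ioi_self
  calc _ ≤ _ := step1
    _ ≤ _ := step2
    _ = _ := by rw [integral_const_mul, int_pow_exp k h1]

lemma fact_prod (l : ℕ) : ∀ N : ℕ, l + 1 ≤ N →
    ((N-1).factorial : ℝ) = ((N-l-1).factorial : ℝ) * ∏ i ∈ Finset.range l, ((N:ℝ)-1-i) := by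
  induction l with
  | zero => intro N hN; simp
  | succ l ih =>
    intro N hN
    obtain ⟨m, rfl⟩ : ∃ m, N = m + (l+2) := ⟨N - (l+2), by omega⟩
    have h1 := ih (m + (l+2)) (by omega)
    rw [h1, Finset.prod_range_succ]
    have e1 : m + (l+2) - l - 1 = m + 1 := by omega
    have e2 : m + (l+2) - (l+1) - 1 = m := by omega
    rw [e1, e2, Nat.factorial_succ]
    push_cast
    ring

lemma ratio_tendsto (c : ℝ) :
    Tendsto (fun N : ℕ => (N:ℝ)/((N:ℝ)-1-c)) atTop (nhds 1) := by
  have h0 : Tendsto (fun N : ℕ => (N:ℝ)-1-c) atTop atTop := by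
    have h := tendsto_atTop_add_const_right atTop (-(1+c))
      (tendsto_natCast_atTop_atTop (R := ℝ))
    exact h.congr (fun N => by ring)
  have h2 : Tendsto (fun N : ℕ => (1+c)/((N:ℝ)-1-c)) atTop (nhds 0) :=
    Tendsto.div_atTop tendsto_const_nhds h0
  have h3 : Tendsto (fun N : ℕ => 1 + (1+c)/((N:ℝ)-1-c)) atTop (nhds 1) := by
    have h4 := (tendsto_const_nhds :
      Tendsto (fun _ : ℕ => (1:ℝ)) atTop (nhds 1)).add h2
    simpa using h4
  apply h3.congr'
  filter_upwards [h0.eventually_gt_atTop 0] with N hN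
  field_simp
  ring

lemma T1 (l : ℕ) :
    Tendsto (fun N : ℕ => (N:ℝ)^l * ((N-l-1).factorial : ℝ) / ((N-1).factorial : ℝ))
      atTop (nhds 1) := by
  have key : Tendsto (fun N : ℕ => ∏ i ∈ Finset.range l, ((N:ℝ)/((N:ℝ)-1-(i:ℝ))))
      atTop (nhds 1) := by
    have := tendsto_finset_prod (f := fun (i : ℕ) (N : ℕ) => (N:ℝ)/((N:ℝ)-1-(i:ℝ)))
      (x := atTop) (a := fun _ => (1:ℝ)) (Finset.range l)
      (fun i _ => ratio_tendsto (i:ℝ))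
    simpa using this
  apply key.congr'
  filter_upwards [eventually_ge_atTop (l+1)] with N hN
  have hfp := fact_prod l N hN
  have hne : ∀ i ∈ Finset.range l, ((N:ℝ)-1-(i:ℝ)) ≠ 0 := by
    intro i hi
    have : i < l := Finset.mem_range.mp hi
    have : (i:ℝ) < (l:ℝ) := by exact_mod_cast this
    have hNl : (l:ℝ) + 1 ≤ (N:ℝ) := by exact_mod_cast hN
    intro h; nlinarith
  rw [Finset.prod_div_distrib, Finset.prod_const, Finset.card_range, hfp]
  have hprod : (∏ i ∈ Finset.range l, ((N:ℝ)-1-(i:ℝ))) ≠ 0 := Finset.prod_ne_zero_iff.mpr hne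
  have hfac : ((N-l-1).factorial : ℝ) ≠ 0 := by positivity
  field_simp

/-- For fixed `0 ≤ w < 1` and fixed integer `l ≥ 0`,
`lim_{N→∞} N^l · Γ(N − l, N w²) / Γ(N) = 1`, where
`Γ(m, a) = ∫_a^∞ t^(m−1) e^(−t) dt` and `Γ(N) = (N−1)!`. -/
theorem incomplete_gamma_ratio_limit (w : ℝ) (hw0 : 0 ≤ w) (hw1 : w < 1) (l : ℕ) :
    Tendsto (fun N : ℕ =>
        (N : ℝ) ^ l *
          (∫ t in Set.Ioi ((N : ℝ) * w ^ 2), t ^ (N - l - 1) * Real.exp (-t))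
          / (Nat.factorial (N - 1) : ℝ))
      atTop (nhds 1) := by
  set c : ℝ := w ^ 2 with hc_def
  have hc0 : 0 ≤ c := sq_nonneg w
  have hc1 : c < 1 := by nlinarith
  set lam : ℝ := (1 - c) / (1 + c) with hlam_def
  have hlam : 0 < lam := div_pos (by linarith) (by linarith)
  have h1l : (0:ℝ) < 1 + lam := by linarith
  set δ : ℝ := Real.log (1 + lam) - lam * c with hδ_def
  have hδ : 0 < δ := by
    have hlog : lam / (1 + lam) ≤ Real.log (1 + lam) := by
      have h := Real.log_le_sub_one_of_pos (x := 1/(1+lam)) (by positivity)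
      rw [Real.log_div one_ne_zero (by positivity), Real.log_one] at h
      have h' : 1 - 1/(1+lam) ≤ Real.log (1+lam) := by linarith
      calc lam/(1+lam) = 1 - 1/(1+lam) := by field_simp; ring
        _ ≤ _ := h'
    have hinv : (1+lam) * (1+c) = 2 := by
      rw [hlam_def]
      field_simp
      ring
    have h5 : 1/(1+lam) = (1+c)/2 := by
      rw [div_eq_div_iff (ne_of_gt h1l) (by norm_num : (2:ℝ) ≠ 0)]
      nlinarith [hinv]
    rw [div_eq_mul_one_div lam (1+lam), h5] at hlog
    rw [hδ_def]
    nlinarith [mul_pos hlam (sub_pos.mpr hc1)]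
  -- the three pieces
  have hA := T1 l
  have hExp : Tendsto (fun N : ℕ => (1+lam)^l * Real.exp (-(δ * N))) atTop (nhds 0) := by
    have h1 : Tendsto (fun N : ℕ => δ * (N:ℝ)) atTop atTop :=
      (tendsto_natCast_atTop_atTop (R := ℝ)).const_mul_atTop hδ
    have h2 : Tendsto (fun N : ℕ => Real.exp (-(δ * N))) atTop (nhds 0) :=
      Real.tendsto_exp_atBot.comp (tendsto_neg_atBot_iff.mpr h1)
    have h3 := h2.const_mul ((1+lam)^l)
    simpa using h3
  have hU : Tendsto (fun N : ℕ =>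
      ((N:ℝ)^l * ((N-l-1).factorial : ℝ) / ((N-1).factorial : ℝ)) *
        ((1+lam)^l * Real.exp (-(δ * N)))) atTop (nhds 0) := by
    have := hA.mul hExp
    simpa using this
  -- B tendsto 0
  have hB : Tendsto (fun N : ℕ =>
      (N:ℝ)^l * (∫ t in Set.Ioc (0:ℝ) ((N:ℝ)*c), t ^ (N-l-1) * Real.exp (-t))
        / ((N-1).factorial : ℝ)) atTop (nhds 0) := by
    apply tendsto_of_tendsto_of_tendsto_of_le_of_le' tendsto_const_nhds hU
    · filter_upwards with N
      apply div_nonneg _ (Nat.cast_nonneg _)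
      apply mul_nonneg (pow_nonneg (Nat.cast_nonneg _) _)
      apply setIntegral_nonneg measurableSet_Ioc
      intro t ht
      exact mul_nonneg (pow_nonneg ht.1.le _) (Real.exp_pos _).le
    · filter_upwards [eventually_ge_atTop (l+1)] with N hN
      set k : ℕ := N - l - 1 with hk_def
      have hkN : k + 1 = N - l := by omega
      have haN : (0:ℝ) ≤ (N:ℝ) * c := mul_nonneg (Nat.cast_nonneg _) hc0
      have hch := chernoff k haN hlam
      have hfacpos : (0:ℝ) < ((N-1).factorial : ℝ) := by positivity
      have hNl : (0:ℝ) ≤ (N:ℝ)^l := pow_nonneg (Nat.cast_nonneg _) _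
      calc (N:ℝ)^l * (∫ t in Set.Ioc (0:ℝ) ((N:ℝ)*c), t ^ k * Real.exp (-t))
            / ((N-1).factorial : ℝ)
          ≤ (N:ℝ)^l * (Real.exp (lam * ((N:ℝ)*c)) * ((k.factorial : ℝ) / (1+lam)^(k+1)))
            / ((N-1).factorial : ℝ) := by gcongr
        _ = ((N:ℝ)^l * ((N-l-1).factorial : ℝ) / ((N-1).factorial : ℝ)) *
            ((1+lam)^l * Real.exp (-(δ * N))) := by
          have e3 : ((1+lam):ℝ)^(k+1)
              = Real.exp ((N:ℝ) * Real.log (1+lam)) * (((1+lam):ℝ)^l)⁻¹ := by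
            rw [hkN, pow_sub₀ _ (ne_of_gt h1l) (show l ≤ N by omega)]
            congr 1
            rw [Real.exp_nat_mul, Real.exp_log h1l]
          have e4 : Real.exp (-(δ*(N:ℝ)))
              = Real.exp (lam*((N:ℝ)*c)) / Real.exp ((N:ℝ)*Real.log (1+lam)) := by
            rw [← Real.exp_sub]
            congr 1
            rw [hδ_def]
            ring
          rw [e3, e4, ← hk_def]
          have hE : Real.exp ((N:ℝ)*Real.log (1+lam)) ≠ 0 := (Real.exp_pos _).ne'
          have hP : (((1+lam):ℝ)^l) ≠ 0 := by positivity
          field_simp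
  -- combine
  refine Tendsto.congr' ?_ (by simpa using hA.sub hB)
  filter_upwards [eventually_ge_atTop (l+1)] with N hN
  have haN : (0:ℝ) ≤ (N:ℝ) * c := mul_nonneg (Nat.cast_nonneg _) hc0
  have hu : Set.Ioc (0:ℝ) ((N:ℝ)*c) ∪ Set.Ioi ((N:ℝ)*c) = Set.Ioi 0 :=
    Ioc_union_Ioi_eq_Ioi haN
  have hadd := setIntegral_union (f := fun t : ℝ => t ^ (N-l-1) * Real.exp (-t))
    (μ := volume) (Set.Ioc_disjoint_Ioi le_rfl) measurableSet_Ioi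
    ((intOn_pow_exp1 (N-l-1)).mono_set Set.Ioc_subset_Ioi_self)
    ((intOn_pow_exp1 (N-l-1)).mono_set (Set.Ioi_subset_Ioi haN))
  rw [hu, int_pow_exp1 (N-l-1)] at hadd
  have hI : (∫ t in Set.Ioi ((N:ℝ)*c), t ^ (N-l-1) * Real.exp (-t))
      = ((N-l-1).factorial : ℝ) - ∫ t in Set.Ioc (0:ℝ) ((N:ℝ)*c), t ^ (N-l-1) * Real.exp (-t) := by
    linarith [hadd]
  simp only [hI]
  ring
end

section
/- The function F(t) = |t − α|² + ln|1 − |t − α|²/|t|²|, defined for complex t with |t| > 1 and fixed complex α with |α| > 1, attains the value 0 at t = α, and F(t) > 0 for all t ≠ α with |t| > 1 in a neighborhood of α (i.e., α is a strict local minimum with F(α) = 0). -/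
/-- For fixed `α ∈ ℂ` with `|α| > 1`, the large deviation rate function
`F(t) = |t−α|² + ln|1 − |t−α|²/|t|²|` satisfies `F(α) = 0`, and `F(t) > 0` for all
`t ≠ α` with `|t| > 1` in some punctured neighbourhood of `α`. -/
theorem rate_function_strict_local_min (α : ℂ) (hα : 1 < ‖α‖) :
    let F : ℂ → ℝ := fun t =>
      (‖t - α‖) ^ 2 +
        Real.log |1 - (‖t - α‖) ^ 2 / (‖t‖) ^ 2|
    F α = 0 ∧ ∃ ε > 0, ∀ t : ℂ, t ≠ α → 1 < ‖t‖ →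
      ‖t - α‖ < ε → 0 < F t := by
  intro F
  have ha1 : (1:ℝ) < ‖α‖ := hα
  constructor
  · simp [F]
  · set a := ‖α‖ with haa
    refine ⟨(a ^ 2 - 1) / (2 * a), div_pos (by nlinarith) (by positivity), ?_⟩
    intro t ht h1 hεlt
    set r := ‖t - α‖ with hr
    have hr0 : 0 < r := by
      rw [hr]
      simpa [sub_eq_zero] using ht
    have hb0 : (0:ℝ) < ‖t‖ := by linarith
    have htabs : a - r ≤ ‖t‖ := by
      have := norm_sub_norm_le α t
      have h2 : ‖α - t‖ = ‖t - α‖ := by rw [norm_sub_rev]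
      rw [h2] at this
      linarith
    have hT : 1 + r ^ 2 < (‖t‖) ^ 2 := by
      have hra : r < (a ^ 2 - 1) / (2 * a) := hεlt
      have h2a : (0:ℝ) < 2 * a := by linarith
      have hra2 : 2 * a * r < a ^ 2 - 1 := by
        rw [lt_div_iff₀ h2a] at hra
        nlinarith
      have har : 0 < a - r := by nlinarith
      nlinarith [mul_le_mul htabs htabs har.le hb0.le]
    set x := r ^ 2 / (‖t‖) ^ 2 with hx
    have hT0 : (0:ℝ) < (‖t‖) ^ 2 := by positivity
    have hx0 : 0 < x := div_pos (by positivity) hT0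
    have hx1 : x < 1 := by
      rw [hx, div_lt_one hT0]; nlinarith
    have h1x : (0:ℝ) < 1 - x := by linarith
    have hlog : -(x / (1 - x)) ≤ Real.log (1 - x) := by
      have h := Real.log_le_sub_one_of_pos (show (0:ℝ) < (1 - x)⁻¹ by positivity)
      rw [Real.log_inv] at h
      have heq : (1 - x)⁻¹ - 1 = x / (1 - x) := by field_simp; ring
      linarith [heq ▸ h]
    have hxT : x * (‖t‖) ^ 2 = r ^ 2 := by
      rw [hx]; field_simp
    have key : x / (1 - x) < r ^ 2 := by
      rw [div_lt_iff₀ h1x]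
      nlinarith [hxT, mul_pos hx0 (sub_pos.mpr hx1)]
    have habs : |1 - x| = 1 - x := abs_of_pos h1x
    show 0 < r ^ 2 + Real.log |1 - x|
    rw [habs]
    linarith
end

section
/- Let P be a polynomial over ℂ with a simple root at z₀ (P(z₀) = 0, P'(z₀) ≠ 0). Then for every continuous function φ : ℂ → ℝ supported in a sufficiently small disc D₀ around z₀ containing no other roots of P, the Gaussian-regularized squared delta satisfies lim_{ε→0} 4π ∫_{D₀} (1/(2πε))² e^(−|P(z)|²/ε) |P(z)|² φ(z) dA(z) = φ(z₀)/|P'(z₀)|², which equals lim_{ε→0} ∫_{D₀} (1/(2πε)) e^(−|P(z)|²/(2ε)) φ(z) dA(z). -/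
open MeasureTheory Filter Real Set Metric Topology

lemma det_restrict (c : ℂ) :
    (((1 : ℂ →L[ℂ] ℂ).smulRight c).restrictScalars ℝ).det = Complex.normSq c := by
  rw [ContinuousLinearMap.det, ← LinearMap.det_toMatrix Complex.basisOneI, Matrix.det_fin_two]
  simp [LinearMap.toMatrix_apply, Complex.normSq_apply]

lemma radial_ball (f : ℝ → ℝ) (R : ℝ) :
    ∫ z in Metric.ball (0:ℂ) R, f ‖z‖ = 2 * π * ∫ r in Ioo (0:ℝ) R, r * f r := by
  rw [← integral_indicator measurableSet_ball]
  have h1 : (Metric.ball (0:ℂ) R).indicator (fun z => f ‖z‖)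
      = fun z : ℂ => (Set.indicator (Iio R) f) ‖z‖ := by
    funext z
    by_cases h : ‖z‖ < R <;>
      simp [Set.indicator, mem_ball_zero_iff, h]
  rw [h1, integral_fun_norm_addHaar volume (Set.indicator (Iio R) f)]
  have h2 : (fun y : ℝ => y ^ (Module.finrank ℝ ℂ - 1) • Set.indicator (Iio R) f y)
      = fun y : ℝ => Set.indicator (Iio R) (fun y => y * f y) y := by
    funext y
    by_cases h : y ∈ Iio R <;> simp [h, Complex.finrank_real_complex]
  rw [h2, setIntegral_indicator measurableSet_Iio, Set.Ioi_inter_Iio]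
  simp [Complex.finrank_real_complex, Measure.real, Complex.volume_ball, smul_eq_mul]
  ring

lemma integral_r3 {b δ : ℝ} (hb : 0 < b) (hδ : 0 < δ) :
    ∫ r in Ioo (0:ℝ) δ, r ^ 3 * Real.exp (-b * r ^ 2)
      = 1/(2*b^2) - (δ^2/(2*b) + 1/(2*b^2)) * Real.exp (-b * δ^2) := by
  have hb' : b ≠ 0 := hb.ne'
  have hder : ∀ r : ℝ, HasDerivAt (fun r => -(r^2/(2*b) + 1/(2*b^2)) * Real.exp (-b * r^2))
      (r ^ 3 * Real.exp (-b * r ^ 2)) r := by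
    intro r
    have h1 : HasDerivAt (fun r : ℝ => -b * r^2) (-b * (2*r)) r := by
      simpa [mul_comm, mul_assoc] using ((hasDerivAt_pow 2 r).const_mul (-b))
    have h2 := h1.exp
    have h3 : HasDerivAt (fun r : ℝ => -(r^2/(2*b) + 1/(2*b^2))) (-(2*r/(2*b))) r := by
      have h4 := ((hasDerivAt_pow 2 r).div_const (2*b)).add_const (1/(2*b^2))
      exact h4.neg.congr_deriv (by norm_num)
    have h5 := h3.mul h2
    refine h5.congr_deriv ?_
    field_simp
    ring
  have hcont : Continuous fun r : ℝ => r ^ 3 * Real.exp (-b * r ^ 2) := by fun_prop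
  rw [← integral_Ioc_eq_integral_Ioo, ← intervalIntegral.integral_of_le hδ.le,
    intervalIntegral.integral_eq_sub_of_hasDerivAt (fun r _ => hder r)
      (hcont.intervalIntegrable 0 δ)]
  norm_num [Real.exp_zero]
  ring

lemma integral_r1 {b δ : ℝ} (hb : 0 < b) (hδ : 0 < δ) :
    ∫ r in Ioo (0:ℝ) δ, r * Real.exp (-b * r ^ 2)
      = 1/(2*b) - (1/(2*b)) * Real.exp (-b * δ^2) := by
  have hb' : b ≠ 0 := hb.ne'
  have hder : ∀ r : ℝ, HasDerivAt (fun r => -(1/(2*b)) * Real.exp (-b * r^2))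
      (r * Real.exp (-b * r ^ 2)) r := by
    intro r
    have h1 : HasDerivAt (fun r : ℝ => -b * r^2) (-b * (2*r)) r := by
      simpa [mul_comm, mul_assoc] using ((hasDerivAt_pow 2 r).const_mul (-b))
    have h5 := h1.exp.const_mul (-(1/(2*b)))
    refine h5.congr_deriv ?_
    field_simp
  have hcont : Continuous fun r : ℝ => r * Real.exp (-b * r ^ 2) := by fun_prop
  rw [← integral_Ioc_eq_integral_Ioo, ← intervalIntegral.integral_of_le hδ.le,
    intervalIntegral.integral_eq_sub_of_hasDerivAt (fun r _ => hder r)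
      (hcont.intervalIntegrable 0 δ)]
  norm_num [Real.exp_zero]
  ring

lemma tendsto_div_atTop {c : ℝ} (hc : 0 < c) :
    Tendsto (fun ε : ℝ => c/ε) (𝓝[>] (0:ℝ)) atTop := by
  have h := (tendsto_inv_nhdsGT_zero (𝕜 := ℝ)).const_mul_atTop hc
  simpa [div_eq_mul_inv] using h

lemma tendsto_xe : Tendsto (fun x : ℝ => x * Real.exp (-x)) atTop (𝓝 0) := by
  simpa using Real.tendsto_pow_mul_exp_neg_atTop_nhds_zero 1

lemma tendsto_x1e : Tendsto (fun x : ℝ => (x+1) * Real.exp (-x)) atTop (𝓝 0) := by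
  have h := tendsto_xe.add Real.tendsto_exp_neg_atTop_nhds_zero
  simpa [add_mul] using h

lemma peak_key {k : ℝ → ℝ → ℝ}
    (hk_cont : ∀ ε : ℝ, 0 < ε → Continuous fun w : ℂ => k ε ‖w‖)
    (hk_nonneg : ∀ ε : ℝ, 0 < ε → ∀ ρ : ℝ, 0 ≤ k ε ρ)
    (hk_mass : ∀ δ : ℝ, 0 < δ →
      Tendsto (fun ε => ∫ w in Metric.ball (0:ℂ) δ, k ε ‖w‖) (𝓝[>] (0:ℝ)) (𝓝 1))
    (hk_tail : ∀ δ : ℝ, 0 < δ → ∃ B : ℝ → ℝ,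
      Tendsto B (𝓝[>] (0:ℝ)) (𝓝 0) ∧ ∀ ε : ℝ, 0 < ε → ∀ ρ : ℝ, δ ≤ ρ → k ε ρ ≤ B ε)
    {s' C : Set ℂ} (hs' : IsOpen s') (h0 : (0:ℂ) ∈ s') (hC : IsCompact C) (hsC : s' ⊆ C)
    {ψ : ℂ → ℝ} (hψ : ContinuousOn ψ C) :
    Tendsto (fun ε => ∫ w in s', k ε ‖w‖ * ψ w) (𝓝[>] (0:ℝ)) (𝓝 (ψ 0)) := by
  obtain ⟨δ₀, hδ₀, hball⟩ := Metric.isOpen_iff.1 hs' 0 h0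
  have h := tendsto_setIntegral_peak_smul_of_integrableOn_of_tendsto
    (μ := volume) (l := 𝓝[>] (0:ℝ)) (φ := fun ε (w : ℂ) => k ε ‖w‖) (g := ψ)
    (x₀ := (0:ℂ)) (a := ψ 0)
    hs'.measurableSet measurableSet_ball hball
    (mem_nhdsWithin_of_mem_nhds (ball_mem_nhds _ hδ₀))
    measure_ball_lt_top.ne
    (by filter_upwards [self_mem_nhdsWithin] with ε hε
        exact fun x _ => hk_nonneg ε hε _)
    (by intro u hu h0u
        obtain ⟨δ, hδ, hbu⟩ := Metric.isOpen_iff.1 hu 0 h0u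
        obtain ⟨B, hB, hBle⟩ := hk_tail δ hδ
        rw [Metric.tendstoUniformlyOn_iff]
        intro η hη
        filter_upwards [hB.eventually_lt_const hη, self_mem_nhdsWithin] with ε hBε hε w hw
        have hδw : δ ≤ ‖w‖ := by
          by_contra hlt
          exact hw.2 (hbu (mem_ball_zero_iff.2 (lt_of_not_ge hlt)))
        have hk := hk_nonneg ε hε ‖w‖
        have := (hBle ε hε _ hδw).trans_lt hBε
        simp only [Pi.zero_apply, dist_zero_left, Real.norm_eq_abs, abs_of_nonneg hk]
        exact this)
    (hk_mass δ₀ hδ₀)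
    (by filter_upwards [self_mem_nhdsWithin] with ε hε
        exact ((hk_cont ε hε).aestronglyMeasurable).restrict)
    ((hψ.integrableOn_compact hC).mono_set hsC)
    ((hψ.mono hsC).continuousWithinAt h0 |>.tendsto)
  simpa [smul_eq_mul] using h

noncomputable def k1' (ε ρ : ℝ) : ℝ := 4 * π * ((1 / (2 * π * ε)) ^ 2 * Real.exp (-ρ ^ 2 / ε) * ρ ^ 2)
noncomputable def k2' (ε ρ : ℝ) : ℝ := (1 / (2 * π * ε)) * Real.exp (-ρ ^ 2 / (2 * ε))







lemma k1'_cont {ε : ℝ} (hε : 0 < ε) : Continuous fun w : ℂ => k1' ε ‖w‖ := by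
  unfold k1'; fun_prop

lemma k2'_cont {ε : ℝ} (hε : 0 < ε) : Continuous fun w : ℂ => k2' ε ‖w‖ := by
  unfold k2'; fun_prop

lemma k1'_nonneg {ε : ℝ} (hε : 0 < ε) (ρ : ℝ) : 0 ≤ k1' ε ρ := by
  unfold k1'; positivity

lemma k2'_nonneg {ε : ℝ} (hε : 0 < ε) (ρ : ℝ) : 0 ≤ k2' ε ρ := by
  unfold k2'; positivity

lemma k1'_mass {δ : ℝ} (hδ : 0 < δ) :
    Tendsto (fun ε => ∫ w in Metric.ball (0:ℂ) δ, k1' ε ‖w‖) (𝓝[>] (0:ℝ)) (𝓝 1) := by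
  have hval : ∀ ε : ℝ, 0 < ε → (∫ w in Metric.ball (0:ℂ) δ, k1' ε ‖w‖)
      = 1 - (δ^2/ε + 1) * Real.exp (-(δ^2/ε)) := by
    intro ε hε
    have hπ := Real.pi_pos
    rw [radial_ball]
    have hb : (0:ℝ) < 1/ε := by positivity
    have hcongr : ∀ r ∈ Ioo (0:ℝ) δ, r * k1' ε r
        = (1/(π*ε^2)) * (r ^ 3 * Real.exp (-(1/ε) * r ^ 2)) := by
      intro r _
      unfold k1'
      rw [show -(1/ε) * r ^ 2 = -r^2/ε by ring]
      field_simp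
      ring
    rw [setIntegral_congr_fun measurableSet_Ioo hcongr, integral_const_mul,
      integral_r3 hb hδ, show -(1/ε) * δ ^ 2 = -(δ^2/ε) by ring]
    field_simp
  have hlim : Tendsto (fun ε : ℝ => 1 - (δ^2/ε + 1) * Real.exp (-(δ^2/ε)))
      (𝓝[>] (0:ℝ)) (𝓝 1) := by
    have h := tendsto_x1e.comp (tendsto_div_atTop (show (0:ℝ) < δ^2 by positivity))
    have h2 := (tendsto_const_nhds (x := (1:ℝ)) (f := 𝓝[>] (0:ℝ))).sub h
    simpa using h2
  exact hlim.congr' (by filter_upwards [self_mem_nhdsWithin] with ε hε; exact (hval ε hε).symm)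

lemma k2'_mass {δ : ℝ} (hδ : 0 < δ) :
    Tendsto (fun ε => ∫ w in Metric.ball (0:ℂ) δ, k2' ε ‖w‖) (𝓝[>] (0:ℝ)) (𝓝 1) := by
  have hval : ∀ ε : ℝ, 0 < ε → (∫ w in Metric.ball (0:ℂ) δ, k2' ε ‖w‖)
      = 1 - Real.exp (-((δ^2/2)/ε)) := by
    intro ε hε
    have hπ := Real.pi_pos
    rw [radial_ball]
    have hb : (0:ℝ) < 1/(2*ε) := by positivity
    have hcongr : ∀ r ∈ Ioo (0:ℝ) δ, r * k2' ε r
        = (1/(2*π*ε)) * (r * Real.exp (-(1/(2*ε)) * r ^ 2)) := by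
      intro r _
      unfold k2'
      rw [show -(1/(2*ε)) * r ^ 2 = -r^2/(2*ε) by ring]
      ring
    rw [setIntegral_congr_fun measurableSet_Ioo hcongr, integral_const_mul,
      integral_r1 hb hδ, show -(1/(2*ε)) * δ ^ 2 = -((δ^2/2)/ε) by ring]
    field_simp
  have hlim : Tendsto (fun ε : ℝ => 1 - Real.exp (-((δ^2/2)/ε))) (𝓝[>] (0:ℝ)) (𝓝 1) := by
    have h : Tendsto (fun x : ℝ => Real.exp (-x)) atTop (𝓝 0) := Real.tendsto_exp_neg_atTop_nhds_zero
    have h2 := (tendsto_const_nhds (x := (1:ℝ)) (f := 𝓝[>] (0:ℝ))).sub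
      (h.comp (tendsto_div_atTop (show (0:ℝ) < δ^2/2 by positivity)))
    simpa using h2
  exact hlim.congr' (by filter_upwards [self_mem_nhdsWithin] with ε hε; exact (hval ε hε).symm)

lemma k1'_tail {δ : ℝ} (hδ : 0 < δ) : ∃ B : ℝ → ℝ,
    Tendsto B (𝓝[>] (0:ℝ)) (𝓝 0) ∧ ∀ ε : ℝ, 0 < ε → ∀ ρ : ℝ, δ ≤ ρ → k1' ε ρ ≤ B ε := by
  have hπ := Real.pi_pos
  refine ⟨fun ε => 2/(π*ε) * Real.exp (-(δ^2/(2*ε))), ?_, ?_⟩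
  · have h := (tendsto_xe.comp (tendsto_div_atTop (show (0:ℝ) < δ^2/2 by positivity))).const_mul
      (4/(π*δ^2))
    rw [mul_zero] at h
    apply h.congr
    intro ε
    simp only [Function.comp_apply]
    rw [show δ^2/2/ε = δ^2/(2*ε) by ring]
    have hc : 4/(π*δ^2) * (δ^2/(2*ε)) = 2/(π*ε) := by
      rw [div_mul_div_comm, show 4 * δ^2 = δ^2 * (2*2) by ring, show π * δ ^ 2 * (2 * ε) = δ^2 * (2*(π*ε)) by ring,
        mul_div_mul_left _ _ (by positivity : (δ:ℝ)^2 ≠ 0)]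
      ring_nf
    calc 4/(π*δ^2) * (δ^2/(2*ε) * Real.exp (-(δ^2/(2*ε))))
        = (4/(π*δ^2) * (δ^2/(2*ε))) * Real.exp (-(δ^2/(2*ε))) := by ring
      _ = 2/(π*ε) * Real.exp (-(δ^2/(2*ε))) := by rw [hc]
  · intro ε hε ρ hρ
    have hx : ρ^2/(2*ε) ≤ Real.exp (ρ^2/(2*ε)) := by
      have := Real.add_one_le_exp (ρ^2/(2*ε)); linarith
    have h1 : ρ^2 * Real.exp (-(ρ^2/(2*ε))) ≤ 2*ε := by
      rw [Real.exp_neg]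
      have hep := Real.exp_pos (ρ^2/(2*ε))
      rw [mul_inv_le_iff₀ hep]
      calc ρ^2 = (ρ^2/(2*ε)) * (2*ε) := by field_simp
        _ ≤ Real.exp (ρ^2/(2*ε)) * (2*ε) := by
            apply mul_le_mul_of_nonneg_right hx (by positivity)
        _ = 2*ε*Real.exp (ρ^2/(2*ε)) := by ring
    have h2 : Real.exp (-(ρ^2/(2*ε))) ≤ Real.exp (-(δ^2/(2*ε))) := by
      apply Real.exp_le_exp.2
      have hsq : δ^2 ≤ ρ^2 := by nlinarith
      apply neg_le_neg
      gcongr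
    calc k1' ε ρ = (1/(π*ε^2)) * ((ρ^2 * Real.exp (-(ρ^2/(2*ε)))) * Real.exp (-(ρ^2/(2*ε)))) := by
          unfold k1'
          rw [show -ρ^2/ε = -(ρ^2/(2*ε)) + -(ρ^2/(2*ε)) by ring, Real.exp_add]
          field_simp
          ring
      _ ≤ (1/(π*ε^2)) * ((2*ε) * Real.exp (-(δ^2/(2*ε)))) := by
          apply mul_le_mul_of_nonneg_left _ (by positivity)
          exact mul_le_mul h1 h2 (Real.exp_pos _).le (by positivity)
      _ = 2/(π*ε) * Real.exp (-(δ^2/(2*ε))) := by field_simp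

lemma k2'_tail {δ : ℝ} (hδ : 0 < δ) : ∃ B : ℝ → ℝ,
    Tendsto B (𝓝[>] (0:ℝ)) (𝓝 0) ∧ ∀ ε : ℝ, 0 < ε → ∀ ρ : ℝ, δ ≤ ρ → k2' ε ρ ≤ B ε := by
  have hπ := Real.pi_pos
  refine ⟨fun ε => 1/(2*π*ε) * Real.exp (-(δ^2/(2*ε))), ?_, ?_⟩
  · have h := (tendsto_xe.comp (tendsto_div_atTop (show (0:ℝ) < δ^2/2 by positivity))).const_mul
      (1/(π*δ^2))
    rw [mul_zero] at h
    apply h.congr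
    intro ε
    simp only [Function.comp_apply]
    rw [show δ^2/2/ε = δ^2/(2*ε) by ring]
    have hc : 1/(π*δ^2) * (δ^2/(2*ε)) = 1/(2*π*ε) := by
      rw [div_mul_div_comm, one_mul, show π * δ ^ 2 * (2 * ε) = δ^2 * (2*π*ε) by ring,
        show (δ:ℝ)^2 = δ^2 * 1 from (mul_one _).symm, mul_assoc,
        mul_div_mul_left _ _ (by positivity : (δ:ℝ)^2 ≠ 0), one_mul]
    calc 1/(π*δ^2) * (δ^2/(2*ε) * Real.exp (-(δ^2/(2*ε))))
        = (1/(π*δ^2) * (δ^2/(2*ε))) * Real.exp (-(δ^2/(2*ε))) := by ring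
      _ = 1/(2*π*ε) * Real.exp (-(δ^2/(2*ε))) := by rw [hc]
  · intro ε hε ρ hρ
    unfold k2'
    apply mul_le_mul_of_nonneg_left _ (by positivity)
    apply Real.exp_le_exp.2
    rw [show -ρ^2/(2*ε) = -(ρ^2/(2*ε)) by ring]
    have hsq : δ^2 ≤ ρ^2 := by nlinarith
    apply neg_le_neg
    gcongr

/-- Near a simple root `z₀` of a polynomial `P`, the Gaussian-regularized squared delta
satisfies, for every continuous `φ` supported in a sufficiently small disc around `z₀`
containing no other roots of `P`,
`lim_{ε→0⁺} 4π ∫ (1/(2πε))² e^(−|P(z)|²/ε) |P(z)|² φ(z) dA(z) = φ(z₀)/|P'(z₀)|²`,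
which also equals `lim_{ε→0⁺} ∫ (1/(2πε)) e^(−|P(z)|²/(2ε)) φ(z) dA(z)`. -/
theorem squared_delta_simple_root (P : Polynomial ℂ) (z₀ : ℂ)
    (h0 : P.eval z₀ = 0) (h1 : P.derivative.eval z₀ ≠ 0) :
    ∃ r₀ > 0, (∀ z ∈ Metric.closedBall z₀ r₀, P.eval z = 0 → z = z₀) ∧
      ∀ r : ℝ, 0 < r → r ≤ r₀ →
      ∀ φ : ℂ → ℝ, Continuous φ → Function.support φ ⊆ Metric.ball z₀ r →
        Tendsto (fun ε : ℝ =>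
            4 * π * ∫ z in Metric.ball z₀ r,
              (1 / (2 * π * ε)) ^ 2 * Real.exp (-(‖P.eval z‖) ^ 2 / ε)
                * (‖P.eval z‖) ^ 2 * φ z)
          (nhdsWithin 0 (Set.Ioi 0))
          (nhds (φ z₀ / (‖P.derivative.eval z₀‖) ^ 2))
        ∧ Tendsto (fun ε : ℝ =>
            ∫ z in Metric.ball z₀ r,
              (1 / (2 * π * ε)) * Real.exp (-(‖P.eval z‖) ^ 2 / (2 * ε)) * φ z)
          (nhdsWithin 0 (Set.Ioi 0))
          (nhds (φ z₀ / (‖P.derivative.eval z₀‖) ^ 2)) := by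
  have hP : ∀ z : ℂ, HasStrictDerivAt (fun z : ℂ => P.eval z) (P.derivative.eval z) z :=
    fun z => P.hasStrictDerivAt z
  set f : ℂ → ℂ := fun z => P.eval z with hf
  set Φ := ((hP z₀).hasStrictFDerivAt_equiv h1).toOpenPartialHomeomorph f with hΦ
  have hcoe : ⇑Φ = f := ((hP z₀).hasStrictFDerivAt_equiv h1).toOpenPartialHomeomorph_coe
  have hz₀ : z₀ ∈ Φ.source := ((hP z₀).hasStrictFDerivAt_equiv h1).mem_toOpenPartialHomeomorph_source
  have hΦz₀ : Φ z₀ = 0 := by rw [hcoe]; exact h0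
  have hNopen : IsOpen {z : ℂ | P.derivative.eval z ≠ 0} :=
    isOpen_compl_singleton.preimage (P.derivative.continuous)
  have hSnhds : Φ.source ∩ {z : ℂ | P.derivative.eval z ≠ 0} ∈ 𝓝 z₀ :=
    (Φ.open_source.inter hNopen).mem_nhds ⟨hz₀, h1⟩
  obtain ⟨r₀, hr₀pos, hr₀sub⟩ := Metric.nhds_basis_closedBall.mem_iff.1 hSnhds
  refine ⟨r₀, hr₀pos, ?_, ?_⟩
  · intro z hz hz0
    apply Φ.injOn (hr₀sub hz).1 hz₀
    rw [hcoe]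
    show f z = f z₀
    simp only [hf]
    rw [hz0, h0]
  · intro r hr hrr₀ φ hφ hφsupp
    have hballsub : Metric.closedBall z₀ r ⊆ Φ.source :=
      fun z hz => (hr₀sub (Metric.closedBall_subset_closedBall hrr₀ hz)).1
    have hder_ne : ∀ z ∈ Metric.closedBall z₀ r, P.derivative.eval z ≠ 0 :=
      fun z hz => (hr₀sub (Metric.closedBall_subset_closedBall hrr₀ hz)).2
    set s' := Φ '' (Metric.ball z₀ r) with hs'
    have hs'open : IsOpen s' :=
      Φ.isOpen_image_of_subset_source isOpen_ball (ball_subset_closedBall.trans hballsub)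
    have h0s' : (0:ℂ) ∈ s' := ⟨z₀, mem_ball_self hr, hΦz₀⟩
    set C := Φ '' (Metric.closedBall z₀ r) with hC
    have hCcomp : IsCompact C :=
      (isCompact_closedBall _ _).image_of_continuousOn (Φ.continuousOn.mono hballsub)
    have hsC : s' ⊆ C := image_mono ball_subset_closedBall
    set ψ : ℂ → ℝ :=
      fun w => φ (Φ.symm w) / ‖P.derivative.eval (Φ.symm w)‖^2 with hψ
    have hCtarget : C ⊆ Φ.target := by
      rintro w ⟨z, hz, rfl⟩; exact Φ.map_source (hballsub hz)
    have hsymm_mem : ∀ w ∈ C, Φ.symm w ∈ Metric.closedBall z₀ r := by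
      rintro w ⟨z, hz, rfl⟩; rw [Φ.left_inv (hballsub hz)]; exact hz
    have hψcont : ContinuousOn ψ C := by
      have hsc : ContinuousOn Φ.symm C := Φ.continuousOn_symm.mono hCtarget
      apply ContinuousOn.div
      · exact hφ.comp_continuousOn hsc
      · exact ((continuous_norm.comp (P.derivative.continuous)).pow 2).comp_continuousOn hsc
      · intro w hw
        exact pow_ne_zero _ (by simpa using hder_ne _ (hsymm_mem w hw))
    have hψ0 : ψ 0 = φ z₀ / (‖P.derivative.eval z₀‖)^2 := by
      have hsymm0 : Φ.symm 0 = z₀ := by rw [← hΦz₀, Φ.left_inv hz₀]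
      simp only [hψ, hsymm0]
    have hCoV : ∀ k : ℝ → ℝ, (∫ z in Metric.ball z₀ r, k (‖P.eval z‖) * φ z)
        = ∫ w in s', k ‖w‖ * ψ w := by
      intro k
      have hfd : ∀ z ∈ Metric.ball z₀ r, HasFDerivWithinAt f
          (((1 : ℂ →L[ℂ] ℂ).smulRight (P.derivative.eval z)).restrictScalars ℝ)
          (Metric.ball z₀ r) z := by
        intro z _
        exact (((hP z).hasDerivAt).hasFDerivAt.restrictScalars ℝ).hasFDerivWithinAt
      have hinj : Set.InjOn f (Metric.ball z₀ r) := by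
        have := Φ.injOn.mono (ball_subset_closedBall.trans hballsub)
        rwa [hcoe] at this
      have him : f '' (Metric.ball z₀ r) = s' := by rw [hs', hcoe]
      have hCV := integral_image_eq_integral_abs_det_fderiv_smul (μ := volume)
        measurableSet_ball hfd hinj (fun w => k ‖w‖ * ψ w)
      rw [him] at hCV
      rw [hCV]
      apply setIntegral_congr_fun measurableSet_ball
      intro z hz
      beta_reduce
      have hz' : z ∈ Φ.source := hballsub (ball_subset_closedBall hz)
      have hψf : ψ (f z) = φ z / ‖P.derivative.eval z‖^2 := by
        have : Φ.symm (f z) = z := by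
          rw [← congrFun hcoe z, Φ.left_inv hz']
        simp only [hψ, this]
      have hne : ‖P.derivative.eval z‖^2 ≠ 0 :=
        pow_ne_zero _ (by simpa using hder_ne z (ball_subset_closedBall hz))
      rw [det_restrict, smul_eq_mul, hψf]
      rw [abs_of_nonneg (Complex.normSq_nonneg _), ← Complex.sq_norm]
      have habs : ‖f z‖ = ‖P.eval z‖ := rfl
      rw [habs]
      field_simp
      rw [mul_div_assoc, div_self (norm_ne_zero_iff.2 (hder_ne z (ball_subset_closedBall hz))), mul_one]
    constructor
    · have h := peak_key (k := k1') (fun ε hε => k1'_cont hε) (fun ε hε => k1'_nonneg hε)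
        (fun δ hδ => k1'_mass hδ) (fun δ hδ => k1'_tail hδ) hs'open h0s' hCcomp hsC hψcont
      rw [hψ0] at h
      apply h.congr
      intro ε
      rw [← hCoV (k1' ε), ← integral_const_mul]
      exact setIntegral_congr_fun measurableSet_ball (fun z _ => by unfold k1'; ring)
    · have h := peak_key (k := k2') (fun ε hε => k2'_cont hε) (fun ε hε => k2'_nonneg hε)
        (fun δ hδ => k2'_mass hδ) (fun δ hδ => k2'_tail hδ) hs'open h0s' hCcomp hsC hψcont
      rw [hψ0] at h
      apply h.congr
      intro ε
      rw [← hCoV (k2' ε)]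
      exact setIntegral_congr_fun measurableSet_ball (fun z _ => by unfold k2'; ring)
end
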